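/- Let X be a real normed space, K a real Banach space with continuous dual K*, and let A : X → L(K, K*) be Gâteaux differentiable with derivative A' : X → L(X, L(K,K*)). Assume: each A(ζ) is boundedly invertible with ‖A(ζ)^{-1}‖ ≤ 1/α for a uniform α > 0; ‖A'(ζ)‖ ≤ M_{A'} for all ζ ∈ X; and A' is Lipschitz: ‖A'(ξ₁) − A'(ξ₂)‖ ≤ L_A ‖ξ₁ − ξ₂‖_X. Fix f ∈ K* and define R'(ζ) ∈ L(X, K) by R'(ζ)η := − A(ζ)^{-1} (A'(ζ)η) A(ζ)^{-1} f. Then the map ζ ↦ R'(ζ) is Lipschitz continuous from X to L(X, K); in fact ‖R'(ξ₁) − R'(ξ₂)‖_{L(X,K)} ≤ ‖f‖_{K*} ( L_A/α² + 2 M_{A'}²/α³ ) ‖ξ₁ − ξ₂‖_X for all ξ₁, ξ₂ ∈ X. -/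

import Mathlib

open Topology Filter

noncomputable section

variable {X K : Type*} [NormedAddCommGroup X] [NormedSpace ℝ X]
  [NormedAddCommGroup K] [NormedSpace ℝ K]

/-- Shortcut instance (definitionally `inferInstance`), helping Lean synthesize the
operator norm on nested spaces of continuous linear maps. -/
instance : SeminormedAddCommGroup (K →L[ℝ] (K →L[ℝ] ℝ)) := inferInstance

/-- Shortcut instance (definitionally `inferInstance`). -/
instance : NormedSpace ℝ (K →L[ℝ] (K →L[ℝ] ℝ)) := inferInstance

set_option maxHeartbeats 1000000 in
/-- Lipschitz continuity of the derivative of the inverse state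
map: if `A : X → L(K,K*)` is Gâteaux differentiable with `‖A(ζ)⁻¹‖ ≤ 1/α`,
`‖A'(ζ)‖ ≤ M_{A'}` uniformly, and `A'` is `L_A`-Lipschitz, then
`R'(ζ)η := −A(ζ)⁻¹ (A'(ζ)η) A(ζ)⁻¹ f` defines a Lipschitz map `ζ ↦ R'(ζ)` from
`X` to `L(X,K)`, with constant `‖f‖(L_A/α² + 2M_{A'}²/α³)`. -/
theorem inverse_state_map_derivative_lipschitz
    [CompleteSpace K]
    (A : X → (K →L[ℝ] (K →L[ℝ] ℝ)))
    (A' : X → (X →L[ℝ] (K →L[ℝ] (K →L[ℝ] ℝ))))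
    (hGateaux : ∀ ξ η : X,
      Tendsto (fun t : ℝ => t⁻¹ • (A (ξ + t • η) - A ξ)) (𝓝[≠] (0 : ℝ)) (𝓝 (A' ξ η)))
    (Ainv : X → ((K →L[ℝ] ℝ) →L[ℝ] K))
    (hinv_left : ∀ ζ : X, ∀ k : K, Ainv ζ (A ζ k) = k)
    (hinv_right : ∀ ζ : X, ∀ g : K →L[ℝ] ℝ, A ζ (Ainv ζ g) = g)
    (α : ℝ) (hα : 0 < α) (hAinv_bdd : ∀ ζ : X, ‖Ainv ζ‖ ≤ 1 / α)
    (MA' : ℝ) (hA'_bdd : ∀ ζ : X, ‖A' ζ‖ ≤ MA')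
    (LA : ℝ) (hA'_lip : ∀ ξ₁ ξ₂ : X, ‖A' ξ₁ - A' ξ₂‖ ≤ LA * ‖ξ₁ - ξ₂‖)
    (f : K →L[ℝ] ℝ)
    (R' : X → (X →L[ℝ] K))
    (hR' : ∀ ζ : X, ∀ η : X, R' ζ η = -(Ainv ζ ((A' ζ η) (Ainv ζ f)))) :
    ∀ ξ₁ ξ₂ : X,
      ‖R' ξ₁ - R' ξ₂‖ ≤ ‖f‖ * (LA / α ^ 2 + 2 * MA' ^ 2 / α ^ 3) * ‖ξ₁ - ξ₂‖ := by
  have hMA'0 : 0 ≤ MA' := le_trans (norm_nonneg _) (hA'_bdd 0)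
  -- Derivative of t ↦ A(ξ + t • η) at any point s
  have hderiv : ∀ ξ η : X, ∀ s : ℝ,
      HasDerivAt (fun t : ℝ => A (ξ + t • η)) (A' (ξ + s • η) η) s := by
    intro ξ η s
    have base : HasDerivAt (fun t : ℝ => A ((ξ + s • η) + t • η)) (A' (ξ + s • η) η) 0 := by
      refine (hasDerivAt_iff_tendsto_slope (𝕜 := ℝ) (F := K →L[ℝ] (K →L[ℝ] ℝ))).mpr ?_
      have heq : slope (fun t : ℝ => A ((ξ + s • η) + t • η)) 0
          = fun t : ℝ => t⁻¹ • (A ((ξ + s • η) + t • η) - A (ξ + s • η)) := by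
        funext t
        rw [slope_def_module]
        simp
      rw [heq]
      exact hGateaux (ξ + s • η) η
    have hshift : HasDerivAt (fun t : ℝ => t - s) (1 : ℝ) s := by
      simpa using (hasDerivAt_id s).sub_const s
    have hcomp := HasDerivAt.scomp_of_eq (𝕜' := ℝ) (F := K →L[ℝ] (K →L[ℝ] ℝ)) s base hshift (sub_self s).symm
    have hfun : ((fun t : ℝ => A ((ξ + s • η) + t • η)) ∘ fun t : ℝ => t - s)
        = fun t : ℝ => A (ξ + t • η) := by
      funext t
      have : (ξ + s • η) + (t - s) • η = ξ + t • η := by module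
      simp [Function.comp, this]
    rw [hfun, one_smul] at hcomp
    exact hcomp
  -- A is Lipschitz with constant MA'
  have hA_lip : ∀ ξ₁ ξ₂ : X, ‖A ξ₁ - A ξ₂‖ ≤ MA' * ‖ξ₁ - ξ₂‖ := by
    intro ξ₁ ξ₂
    have key : ‖(fun t : ℝ => A (ξ₂ + t • (ξ₁ - ξ₂))) 1 - (fun t : ℝ => A (ξ₂ + t • (ξ₁ - ξ₂))) 0‖
        ≤ MA' * ‖ξ₁ - ξ₂‖ := by
      apply norm_image_sub_le_of_norm_deriv_le_segment_01'
        (f := fun t : ℝ => A (ξ₂ + t • (ξ₁ - ξ₂)))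
        (f' := fun t : ℝ => A' (ξ₂ + t • (ξ₁ - ξ₂)) (ξ₁ - ξ₂))
      · intro x _
        exact (hderiv ξ₂ (ξ₁ - ξ₂) x).hasDerivWithinAt
      · intro x _
        calc ‖A' (ξ₂ + x • (ξ₁ - ξ₂)) (ξ₁ - ξ₂)‖
            ≤ ‖A' (ξ₂ + x • (ξ₁ - ξ₂))‖ * ‖ξ₁ - ξ₂‖ :=
              (A' (ξ₂ + x • (ξ₁ - ξ₂))).le_opNorm _
          _ ≤ MA' * ‖ξ₁ - ξ₂‖ :=
              mul_le_mul_of_nonneg_right (hA'_bdd _) (norm_nonneg _)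
    have h1 : ξ₂ + (1:ℝ) • (ξ₁ - ξ₂) = ξ₁ := by module
    have h0 : ξ₂ + (0:ℝ) • (ξ₁ - ξ₂) = ξ₂ := by module
    simp only [h1, h0] at key
    exact key
  -- Ainv is Lipschitz with constant MA' / α²
  have hAinv_lip : ∀ ξ₁ ξ₂ : X, ‖Ainv ξ₁ - Ainv ξ₂‖ ≤ MA' / α ^ 2 * ‖ξ₁ - ξ₂‖ := by
    intro ξ₁ ξ₂
    apply ContinuousLinearMap.opNorm_le_bound
    · positivity
    intro g
    have hid : (Ainv ξ₁ - Ainv ξ₂) g = Ainv ξ₁ ((A ξ₂ - A ξ₁) (Ainv ξ₂ g)) := by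
      have h1 : Ainv ξ₁ (A ξ₂ (Ainv ξ₂ g)) = Ainv ξ₁ g := by rw [hinv_right]
      have h2 : Ainv ξ₁ (A ξ₁ (Ainv ξ₂ g)) = Ainv ξ₂ g := hinv_left _ _
      simp [map_sub, h1, h2]
    rw [hid]
    calc ‖Ainv ξ₁ ((A ξ₂ - A ξ₁) (Ainv ξ₂ g))‖
        ≤ ‖Ainv ξ₁‖ * (‖A ξ₂ - A ξ₁‖ * (‖Ainv ξ₂‖ * ‖g‖)) := by
          refine ((Ainv ξ₁).le_opNorm _).trans ?_
          refine mul_le_mul_of_nonneg_left ?_ (norm_nonneg _)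
          refine ((A ξ₂ - A ξ₁).le_opNorm _).trans ?_
          exact mul_le_mul_of_nonneg_left ((Ainv ξ₂).le_opNorm g) (norm_nonneg _)
      _ ≤ (1 / α) * ((MA' * ‖ξ₁ - ξ₂‖) * ((1 / α) * ‖g‖)) := by
          have h1 := hAinv_bdd ξ₁
          have h2 := hAinv_bdd ξ₂
          have h3 : ‖A ξ₂ - A ξ₁‖ ≤ MA' * ‖ξ₁ - ξ₂‖ := by
            rw [norm_sub_rev]; exact hA_lip ξ₁ ξ₂
          gcongr
      _ = MA' / α ^ 2 * ‖ξ₁ - ξ₂‖ * ‖g‖ := by ring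
  intro ξ₁ ξ₂
  rcases eq_or_ne ξ₁ ξ₂ with rfl | hne
  · simp
  have hd : 0 < ‖ξ₁ - ξ₂‖ := by
    rw [norm_pos_iff, sub_ne_zero]; exact hne
  have hLA : 0 ≤ LA := by
    have := (norm_nonneg (A' ξ₁ - A' ξ₂)).trans (hA'_lip ξ₁ ξ₂)
    nlinarith
  apply ContinuousLinearMap.opNorm_le_bound
  · positivity
  intro η
  have hval : (R' ξ₁ - R' ξ₂) η =
      -((Ainv ξ₁ - Ainv ξ₂) ((A' ξ₁ η) (Ainv ξ₁ f))
        + Ainv ξ₂ (((A' ξ₁ - A' ξ₂) η) (Ainv ξ₁ f))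
        + Ainv ξ₂ ((A' ξ₂ η) ((Ainv ξ₁ - Ainv ξ₂) f))) := by
    simp only [ContinuousLinearMap.sub_apply, hR', map_sub,
      ContinuousLinearMap.coe_sub', Pi.sub_apply]
    abel
  rw [hval, norm_neg]
  have e1 : ‖(Ainv ξ₁ - Ainv ξ₂) ((A' ξ₁ η) (Ainv ξ₁ f))‖
      ≤ (MA' / α ^ 2 * ‖ξ₁ - ξ₂‖) * (MA' * ‖η‖ * ((1 / α) * ‖f‖)) := by
    refine ((Ainv ξ₁ - Ainv ξ₂).le_opNorm _).trans ?_
    have h1 : ‖(A' ξ₁ η) (Ainv ξ₁ f)‖ ≤ MA' * ‖η‖ * ((1 / α) * ‖f‖) := by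
      refine ((A' ξ₁ η).le_opNorm _).trans ?_
      have ha : ‖A' ξ₁ η‖ ≤ MA' * ‖η‖ := by
        refine ((A' ξ₁).le_opNorm η).trans ?_
        exact mul_le_mul_of_nonneg_right (hA'_bdd _) (norm_nonneg _)
      have hb : ‖Ainv ξ₁ f‖ ≤ (1 / α) * ‖f‖ := by
        refine ((Ainv ξ₁).le_opNorm f).trans ?_
        exact mul_le_mul_of_nonneg_right (hAinv_bdd _) (norm_nonneg _)
      exact mul_le_mul ha hb (norm_nonneg _) (by positivity)
    exact mul_le_mul (hAinv_lip ξ₁ ξ₂) h1 (norm_nonneg _) (by positivity)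
  have e2 : ‖Ainv ξ₂ (((A' ξ₁ - A' ξ₂) η) (Ainv ξ₁ f))‖
      ≤ (1 / α) * (LA * ‖ξ₁ - ξ₂‖ * ‖η‖ * ((1 / α) * ‖f‖)) := by
    refine ((Ainv ξ₂).le_opNorm _).trans ?_
    have h1 : ‖((A' ξ₁ - A' ξ₂) η) (Ainv ξ₁ f)‖
        ≤ LA * ‖ξ₁ - ξ₂‖ * ‖η‖ * ((1 / α) * ‖f‖) := by
      refine (((A' ξ₁ - A' ξ₂) η).le_opNorm _).trans ?_
      have ha : ‖(A' ξ₁ - A' ξ₂) η‖ ≤ LA * ‖ξ₁ - ξ₂‖ * ‖η‖ := by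
        refine ((A' ξ₁ - A' ξ₂).le_opNorm η).trans ?_
        exact mul_le_mul_of_nonneg_right (hA'_lip ξ₁ ξ₂) (norm_nonneg _)
      have hb : ‖Ainv ξ₁ f‖ ≤ (1 / α) * ‖f‖ := by
        refine ((Ainv ξ₁).le_opNorm f).trans ?_
        exact mul_le_mul_of_nonneg_right (hAinv_bdd _) (norm_nonneg _)
      exact mul_le_mul ha hb (norm_nonneg _) (by positivity)
    exact mul_le_mul (hAinv_bdd _) h1 (norm_nonneg _) (by positivity)
  have e3 : ‖Ainv ξ₂ ((A' ξ₂ η) ((Ainv ξ₁ - Ainv ξ₂) f))‖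
      ≤ (1 / α) * (MA' * ‖η‖ * ((MA' / α ^ 2 * ‖ξ₁ - ξ₂‖) * ‖f‖)) := by
    refine ((Ainv ξ₂).le_opNorm _).trans ?_
    have h1 : ‖(A' ξ₂ η) ((Ainv ξ₁ - Ainv ξ₂) f)‖
        ≤ MA' * ‖η‖ * ((MA' / α ^ 2 * ‖ξ₁ - ξ₂‖) * ‖f‖) := by
      refine ((A' ξ₂ η).le_opNorm _).trans ?_
      have ha : ‖A' ξ₂ η‖ ≤ MA' * ‖η‖ := by
        refine ((A' ξ₂).le_opNorm η).trans ?_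
        exact mul_le_mul_of_nonneg_right (hA'_bdd _) (norm_nonneg _)
      have hb : ‖(Ainv ξ₁ - Ainv ξ₂) f‖ ≤ (MA' / α ^ 2 * ‖ξ₁ - ξ₂‖) * ‖f‖ := by
        refine ((Ainv ξ₁ - Ainv ξ₂).le_opNorm f).trans ?_
        exact mul_le_mul_of_nonneg_right (hAinv_lip ξ₁ ξ₂) (norm_nonneg _)
      exact mul_le_mul ha hb (norm_nonneg _) (by positivity)
    exact mul_le_mul (hAinv_bdd _) h1 (norm_nonneg _) (by positivity)
  calc ‖(Ainv ξ₁ - Ainv ξ₂) ((A' ξ₁ η) (Ainv ξ₁ f))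
        + Ainv ξ₂ (((A' ξ₁ - A' ξ₂) η) (Ainv ξ₁ f))
        + Ainv ξ₂ ((A' ξ₂ η) ((Ainv ξ₁ - Ainv ξ₂) f))‖
      ≤ ‖(Ainv ξ₁ - Ainv ξ₂) ((A' ξ₁ η) (Ainv ξ₁ f))‖
        + ‖Ainv ξ₂ (((A' ξ₁ - A' ξ₂) η) (Ainv ξ₁ f))‖
        + ‖Ainv ξ₂ ((A' ξ₂ η) ((Ainv ξ₁ - Ainv ξ₂) f))‖ := norm_add₃_le
    _ ≤ (MA' / α ^ 2 * ‖ξ₁ - ξ₂‖) * (MA' * ‖η‖ * ((1 / α) * ‖f‖))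
        + (1 / α) * (LA * ‖ξ₁ - ξ₂‖ * ‖η‖ * ((1 / α) * ‖f‖))
        + (1 / α) * (MA' * ‖η‖ * ((MA' / α ^ 2 * ‖ξ₁ - ξ₂‖) * ‖f‖)) := by
          gcongr
    _ = ‖f‖ * (LA / α ^ 2 + 2 * MA' ^ 2 / α ^ 3) * ‖ξ₁ - ξ₂‖ * ‖η‖ := by
          field_simp
          ring

end
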